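/- Let p, q ∈ (0,1] and let (u(x))_{x≥1} be i.i.d. ℕ-valued random variables with the linear-fractional law P(u(1) = 0) = 1 − q and P(u(1) = k) = q (1 − p)^{k−1} p for k ≥ 1. Let v(x) be the dual offspring numbers. Then v(1), v(2), v(3), … are mutually independent, P(v(1) = k) = (1 − q)^{k−1} q for k ≥ 1, and for every x ≥ 2: P(v(x) = 0) = 1 − p and P(v(x) = k) = p (1 − q)^{k−1} q for k ≥ 1. In particular, the dual is a Galton–Watson reproduction with an eternal particle: v(1) ≥ 1 a.s. and v(2), v(3), … are identically distributed. -/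

import Mathlib

open MeasureTheory ProbabilityTheory Finset
open scoped ENNReal

/-- marginal law of the dual offspring numbers -/
noncomputable def marg (p q : ℝ≥0∞) (j k : ℕ) : ℝ≥0∞ :=
  if j = 1 then (if k = 0 then 0 else (1 - q) ^ (k - 1) * q)
  else if k = 0 then 1 - p else p * (1 - q) ^ (k - 1) * q

/-- partial sums of the offspring numbers, 0-indexed family -/
def Wsum {Ω : Type*} (u : ℕ → Ω → ℕ) (ω : Ω) (x : ℕ) : ℕ :=
  ∑ i ∈ Finset.range x, u (i + 1) ω

def asum (a : ℕ → ℕ) (j : ℕ) : ℕ := ∑ i ∈ Finset.Icc 1 j, a i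

/-- the event describing the dual values `a 1, …, a n` in terms of the primary walk -/
def Eev {Ω : Type*} (u : ℕ → Ω → ℕ) (a : ℕ → ℕ) (n : ℕ) : Set Ω :=
  {ω | ∀ j ∈ Finset.Icc 1 n,
    j ≤ Wsum u ω (asum a j) ∧ (1 ≤ a j → Wsum u ω (asum a j - 1) < j)}

lemma Wsum_zero {Ω : Type*} (u : ℕ → Ω → ℕ) (ω : Ω) : Wsum u ω 0 = 0 := by simp [Wsum]

lemma Wsum_succ {Ω : Type*} (u : ℕ → Ω → ℕ) (ω : Ω) (x : ℕ) :
    Wsum u ω (x + 1) = Wsum u ω x + u (x + 1) ω := Finset.sum_range_succ _ _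

lemma Wsum_mono {Ω : Type*} (u : ℕ → Ω → ℕ) (ω : Ω) {x y : ℕ} (h : x ≤ y) :
    Wsum u ω x ≤ Wsum u ω y :=
  Finset.sum_le_sum_of_subset (Finset.range_subset_range.2 h)

lemma Wsum_add {Ω : Type*} (u : ℕ → Ω → ℕ) (ω : Ω) {x y : ℕ} (h : x ≤ y) :
    Wsum u ω y = Wsum u ω x + ∑ i ∈ Finset.Ico x y, u (i + 1) ω :=
  (Finset.sum_range_add_sum_Ico _ h).symm

lemma asum_zero (a : ℕ → ℕ) : asum a 0 = 0 := by simp [asum]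

lemma asum_succ (a : ℕ → ℕ) (j : ℕ) : asum a (j + 1) = asum a j + a (j + 1) := by
  unfold asum
  rw [← Finset.Ico_add_one_right_eq_Icc, Finset.sum_Ico_succ_top (by omega), Finset.Ico_add_one_right_eq_Icc]

lemma asum_mono (a : ℕ → ℕ) {j j' : ℕ} (h : j ≤ j') : asum a j ≤ asum a j' :=
  Finset.sum_le_sum_of_subset (Finset.Icc_subset_Icc le_rfl h)

lemma le_asum (a : ℕ → ℕ) {j : ℕ} (h : 1 ≤ j) : a j ≤ asum a j :=
  Finset.single_le_sum (f := a) (fun _ _ => Nat.zero_le _) (Finset.mem_Icc.2 ⟨h, le_rfl⟩)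

lemma sum_Icc_one {M : Type*} [AddCommMonoid M] (f : ℕ → M) (x : ℕ) :
    ∑ i ∈ Finset.Icc 1 x, f i = ∑ i ∈ Finset.range x, f (i + 1) := by
  induction x with
  | zero => simp
  | succ n ih =>
    rw [Finset.sum_range_succ, ← ih, ← Finset.Ico_add_one_right_eq_Icc,
      Finset.sum_Ico_succ_top (by omega), Finset.Ico_add_one_right_eq_Icc]

lemma measurable_Wsum {Ω : Type*} [MeasurableSpace Ω] {u : ℕ → Ω → ℕ}
    (hmeas : ∀ x : ℕ, Measurable (u x)) (x : ℕ) :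
    Measurable (fun ω => Wsum u ω x) :=
  Finset.measurable_sum _ (fun i _ => hmeas (i + 1))

lemma measurableSet_Eev {Ω : Type*} [MeasurableSpace Ω] {u : ℕ → Ω → ℕ}
    (hmeas : ∀ x : ℕ, Measurable (u x)) (a : ℕ → ℕ) (n : ℕ) :
    MeasurableSet (Eev u a n) := by
  have h1 : Eev u a n = ⋂ j ∈ Finset.Icc 1 n,
      ({ω | j ≤ Wsum u ω (asum a j)} ∩ {ω | 1 ≤ a j → Wsum u ω (asum a j - 1) < j}) := by
    ext ω; simp [Eev, Set.mem_iInter]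
  rw [h1]
  refine MeasurableSet.biInter (Finset.Icc 1 n : Finset ℕ).countable_toSet (fun j _ => ?_)
  refine MeasurableSet.inter ?_ ?_
  · exact measurable_Wsum hmeas (asum a j) (MeasurableSet.of_discrete (s := {y | j ≤ y}))
  · by_cases ha : 1 ≤ a j
    · have : {ω : Ω | 1 ≤ a j → Wsum u ω (asum a j - 1) < j}
          = {ω | Wsum u ω (asum a j - 1) < j} := by ext ω; simp [ha]
      rw [this]
      exact measurable_Wsum hmeas (asum a j - 1) (MeasurableSet.of_discrete (s := {y | y < j}))
    · have : {ω : Ω | 1 ≤ a j → Wsum u ω (asum a j - 1) < j} = Set.univ := by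
        ext ω; simp [ha]
      rw [this]; exact MeasurableSet.univ

lemma geom_tsum {r : ℝ≥0∞} (h0 : 0 < r) (h1 : r ≤ 1) :
    (∑' k : ℕ, (1 - r) ^ k * r) = 1 := by
  rw [ENNReal.tsum_mul_right, ENNReal.tsum_geometric,
    ENNReal.sub_sub_cancel ENNReal.one_ne_top h1,
    ENNReal.inv_mul_cancel h0.ne' (h1.trans_lt ENNReal.one_lt_top).ne]

lemma tsum_marg {p q : ℝ≥0∞} (hp0 : 0 < p) (hp1 : p ≤ 1) (hq0 : 0 < q) (hq1 : q ≤ 1)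
    (j : ℕ) : ∑' k, marg p q j k = 1 := by
  rw [tsum_eq_zero_add' ENNReal.summable]
  by_cases hj : j = 1
  · simp only [marg, hj, if_true, Nat.succ_ne_zero, if_false, Nat.add_sub_cancel, zero_add,
      eq_self_iff_true]
    exact geom_tsum hq0 hq1
  · simp only [marg, if_neg hj, if_true, Nat.succ_ne_zero, if_false, Nat.add_sub_cancel,
      eq_self_iff_true]
    have h2 : ∑' (k : ℕ), p * (1 - q) ^ k * q = p := by
      simp_rw [mul_assoc, ENNReal.tsum_mul_left, geom_tsum hq0 hq1, mul_one]
    rw [h2, tsub_add_cancel_of_le hp1]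

lemma prodSingles {Ω : Type*} [MeasurableSpace Ω] {μ : Measure Ω} {u : ℕ → Ω → ℕ}
    (hindep : iIndepFun (fun n : ℕ => u (n + 1)) μ)
    (S : Finset ℕ) (e : ℕ → ℕ) :
    μ (⋂ i ∈ S, {ω | u (i + 1) ω = e i}) = ∏ i ∈ S, μ {ω | u (i + 1) ω = e i} :=
  hindep.meas_biInter (fun i _ => ⟨{e i}, MeasurableSet.of_discrete, rfl⟩)
lemma key {Ω : Type*} [MeasurableSpace Ω] (μ : Measure Ω) [IsProbabilityMeasure μ]
    (p q : ℝ≥0∞) (hp0 : 0 < p) (hp1 : p ≤ 1) (hq0 : 0 < q) (hq1 : q ≤ 1)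
    (u : ℕ → Ω → ℕ) (hmeas : ∀ x : ℕ, Measurable (u x))
    (hindep : iIndepFun (fun n : ℕ => u (n + 1)) μ)
    (hdist0 : ∀ x : ℕ, 1 ≤ x → μ {ω | u x ω = 0} = 1 - q)
    (hdistk : ∀ x : ℕ, 1 ≤ x → ∀ k : ℕ, 1 ≤ k →
      μ {ω | u x ω = k} = q * (1 - p) ^ (k - 1) * p) :
    ∀ n : ℕ, 1 ≤ n → ∀ a : ℕ → ℕ, 1 ≤ a 1 → ∀ m : ℕ,
      μ (Eev u a n ∩ {ω | Wsum u ω (asum a n) = n + m})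
        = (∏ j ∈ Finset.Icc 1 n, marg p q j (a j)) * ((1 - p) ^ m * p) := by
  intro n hn
  induction n, hn using Nat.le_induction with
  | base =>
    intro a ha m
    obtain ⟨c, hc⟩ : ∃ c, a 1 = c + 1 := ⟨a 1 - 1, by omega⟩
    have hasum1 : asum a 1 = c + 1 := by
      rw [show (1:ℕ) = 0 + 1 by rfl, asum_succ, asum_zero, zero_add, hc]
    have hset : Eev u a 1 ∩ {ω | Wsum u ω (asum a 1) = 1 + m}
        = ⋂ i ∈ Finset.range (c + 1), {ω | u (i + 1) ω = if i = c then 1 + m else 0} := by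
      ext ω
      simp only [Eev, Set.mem_inter_iff, Set.mem_setOf_eq, Set.mem_iInter, Finset.mem_Icc,
        Finset.mem_range, hasum1]
      constructor
      · rintro ⟨hE, hW⟩
        have hE1 := hE 1 ⟨le_rfl, le_rfl⟩
        rw [hasum1] at hE1
        have hW0 : Wsum u ω (c + 1 - 1) = 0 := by
          have := hE1.2 (by omega); omega
        simp only [Nat.add_sub_cancel] at hW0
        have hzero : ∀ i ∈ Finset.range c, u (i + 1) ω = 0 :=
          Finset.sum_eq_zero_iff.1 hW0
        have hlast : u (c + 1) ω = 1 + m := by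
          have hs := Wsum_succ u ω c
          omega
        intro i hi
        by_cases hieq : i = c
        · rw [if_pos hieq, hieq]; exact hlast
        · rw [if_neg hieq]; exact hzero i (Finset.mem_range.2 (by omega))
      · intro h
        have hzero : ∀ i ∈ Finset.range c, u (i + 1) ω = 0 := by
          intro i hi
          have hlt := Finset.mem_range.1 hi
          have := h i (by omega)
          rwa [if_neg (by omega)] at this
        have hlast : u (c + 1) ω = 1 + m := by
          have := h c (by omega); rwa [if_pos rfl] at this
        have hW0 : Wsum u ω c = 0 := Finset.sum_eq_zero hzero
        have hWc : Wsum u ω (c + 1) = 1 + m := by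
          have hs := Wsum_succ u ω c; omega
        refine ⟨?_, hWc⟩
        intro j hj
        have hj1 : j = 1 := by omega
        subst hj1
        rw [hasum1]
        exact ⟨by omega, fun _ => by simp only [Nat.add_sub_cancel]; omega⟩
    rw [hset, prodSingles hindep]
    have hprodval : ∏ i ∈ Finset.range (c + 1), μ {ω | u (i + 1) ω = if i = c then 1 + m else 0}
        = (1 - q) ^ c * (q * (1 - p) ^ m * p) := by
      rw [Finset.prod_range_succ]
      have h1 : ∏ i ∈ Finset.range c, μ {ω | u (i + 1) ω = if i = c then 1 + m else 0}
          = (1 - q) ^ c := by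
        rw [Finset.prod_congr rfl (fun i hi => ?_), Finset.prod_const, Finset.card_range]
        have hlt := Finset.mem_range.1 hi
        rw [if_neg (by omega)]
        exact hdist0 (i + 1) (by omega)
      rw [h1, if_pos rfl, hdistk (c + 1) (by omega) (1 + m) (by omega)]
      simp only [Nat.add_sub_cancel_left]
    rw [hprodval]
    rw [Finset.Icc_self 1, Finset.prod_singleton]
    have hm1 : marg p q 1 (a 1) = (1 - q) ^ c * q := by
      have h1 : ¬ a 1 = 0 := by omega
      simp [marg, h1, hc]
    rw [hm1]; ring
  | succ n hn ih =>
    intro a ha m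
    by_cases hb : a (n + 1) = 0
    · -- zero case
      have hasum : asum a (n + 1) = asum a n := by rw [asum_succ, hb, Nat.add_zero]
      have hset : Eev u a (n + 1) ∩ {ω | Wsum u ω (asum a (n + 1)) = (n + 1) + m}
          = Eev u a n ∩ {ω | Wsum u ω (asum a n) = n + (m + 1)} := by
        ext ω
        simp only [Eev, Set.mem_inter_iff, Set.mem_setOf_eq, hasum]
        constructor
        · rintro ⟨hE, hW⟩
          exact ⟨fun j hj => hE j (Finset.mem_Icc.2 (by simp only [Finset.mem_Icc] at hj; omega)),
            by omega⟩
        · rintro ⟨hE, hW⟩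
          refine ⟨fun j hj => ?_, by omega⟩
          simp only [Finset.mem_Icc] at hj
          by_cases hjn : j ≤ n
          · exact hE j (Finset.mem_Icc.2 ⟨hj.1, hjn⟩)
          · have hj1 : j = n + 1 := by omega
            subst hj1
            rw [hasum]
            exact ⟨by omega, fun hcon => by omega⟩
      rw [hset, ih a ha (m + 1), Finset.prod_Icc_succ_top (by omega : 1 ≤ n + 1)]
      have hm0 : marg p q (n + 1) (a (n + 1)) = 1 - p := by
        have hne : ¬ (n + 1 = 1) := by omega
        simp [marg, hne, hb]
        intro h; omega
      rw [hm0, pow_succ]; ring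
    · -- positive case
      obtain ⟨B, hB⟩ : ∃ B, a (n + 1) = B + 1 := ⟨a (n + 1) - 1, by omega⟩
      have hcs : asum a (n + 1) = asum a n + (B + 1) := by rw [asum_succ, hB]
      have hset : Eev u a (n + 1) ∩ {ω | Wsum u ω (asum a (n + 1)) = (n + 1) + m}
          = (Eev u a n ∩ {ω | Wsum u ω (asum a n) = n + 0}) ∩
            (⋂ i ∈ Finset.Ico (asum a n) (asum a n + (B + 1)),
              {ω | u (i + 1) ω = if i = asum a n + B then 1 + m else 0}) := by
        ext ω
        simp only [Set.mem_inter_iff, Set.mem_setOf_eq, Set.mem_iInter, Finset.mem_Ico]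
        constructor
        · rintro ⟨hE, hW⟩
          rw [hcs] at hW
          have hE' : ω ∈ Eev u a n := by
            intro j hj
            exact hE j (Finset.mem_Icc.2 (by simp only [Finset.mem_Icc] at hj; omega))
          have hEn := hE' n (Finset.mem_Icc.2 ⟨hn, le_rfl⟩)
          have hlast := hE (n + 1) (Finset.mem_Icc.2 ⟨by omega, le_rfl⟩)
          have h2 := hlast.2 (by omega)
          rw [hcs] at h2
          have heq : asum a n + (B + 1) - 1 = asum a n + B := by omega
          rw [heq] at h2
          have hWle : Wsum u ω (asum a n) ≤ Wsum u ω (asum a n + B) := Wsum_mono u ω (by omega)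
          have hWcn : Wsum u ω (asum a n) = n + 0 := by
            have h1 := hEn.1; omega
          have hWadd : Wsum u ω (asum a n + B)
              = Wsum u ω (asum a n) + ∑ i ∈ Finset.Ico (asum a n) (asum a n + B), u (i + 1) ω :=
            Wsum_add u ω (by omega)
          have hsum0 : ∑ i ∈ Finset.Ico (asum a n) (asum a n + B), u (i + 1) ω = 0 := by omega
          have hmid : ∀ i ∈ Finset.Ico (asum a n) (asum a n + B), u (i + 1) ω = 0 :=
            Finset.sum_eq_zero_iff.1 hsum0
          have hlastu : u (asum a n + B + 1) ω = 1 + m := by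
            have hs := Wsum_succ u ω (asum a n + B)
            have hfull : Wsum u ω (asum a n + B + 1) = n + 1 + m := by
              have heq2 : asum a n + (B + 1) = asum a n + B + 1 := by omega
              rw [heq2] at hW; exact hW
            omega
          refine ⟨⟨hE', hWcn⟩, ?_⟩
          intro i hi
          by_cases hieq : i = asum a n + B
          · rw [if_pos hieq, hieq]; exact hlastu
          · rw [if_neg hieq]
            exact hmid i (Finset.mem_Ico.2 (by omega))
        · rintro ⟨⟨hE, hWc⟩, hblock⟩
          have hmid : ∀ i ∈ Finset.Ico (asum a n) (asum a n + B), u (i + 1) ω = 0 := by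
            intro i hi
            have hi' := Finset.mem_Ico.1 hi
            have := hblock i ⟨hi'.1, by omega⟩
            rwa [if_neg (by omega)] at this
          have hsum0 : ∑ i ∈ Finset.Ico (asum a n) (asum a n + B), u (i + 1) ω = 0 :=
            Finset.sum_eq_zero hmid
          have hWadd : Wsum u ω (asum a n + B)
              = Wsum u ω (asum a n) + ∑ i ∈ Finset.Ico (asum a n) (asum a n + B), u (i + 1) ω :=
            Wsum_add u ω (by omega)
          have hWB : Wsum u ω (asum a n + B) = n := by omega
          have hlastu : u (asum a n + B + 1) ω = 1 + m := by
            have := hblock (asum a n + B) ⟨by omega, by omega⟩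
            rwa [if_pos rfl] at this
          have hWfull : Wsum u ω (asum a n + (B + 1)) = n + 1 + m := by
            have heq : asum a n + (B + 1) = (asum a n + B) + 1 := by omega
            rw [heq, Wsum_succ]; omega
          constructor
          · intro j hj
            have hj' := Finset.mem_Icc.1 hj
            by_cases hjn : j ≤ n
            · exact hE j (Finset.mem_Icc.2 ⟨hj'.1, hjn⟩)
            · have hj1 : j = n + 1 := by omega
              subst hj1
              rw [hcs]
              refine ⟨by omega, fun _ => ?_⟩
              have heq : asum a n + (B + 1) - 1 = asum a n + B := by omega
              rw [heq]; omega
          · rw [hcs]; omega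
      rw [hset]
      -- independence step
      have hdisj : Disjoint (Finset.range (asum a n))
          (Finset.Ico (asum a n) (asum a n + (B + 1))) := by
        rw [Finset.disjoint_left]
        intro i hiS hiT
        rw [Finset.mem_range] at hiS
        rw [Finset.mem_Ico] at hiT
        omega
      have hIF := hindep.indepFun_finset (Finset.range (asum a n))
        (Finset.Ico (asum a n) (asum a n + (B + 1))) hdisj (fun i => hmeas (i + 1))
      set ps : ({x // x ∈ Finset.range (asum a n)} → ℕ) → ℕ → ℕ :=
        fun g x => ∑ i ∈ Finset.range x,
          (if h : i ∈ Finset.range (asum a n) then g ⟨i, h⟩ else 0) with hpsdef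
      set A' : Set ({x // x ∈ Finset.range (asum a n)} → ℕ) :=
        {g | (∀ j ∈ Finset.Icc 1 n,
            j ≤ ps g (asum a j) ∧ (1 ≤ a j → ps g (asum a j - 1) < j)) ∧
          ps g (asum a n) = n + 0} with hA'def
      set B' : Set ({x // x ∈ Finset.Ico (asum a n) (asum a n + (B + 1))} → ℕ) :=
        {g | ∀ i : {x // x ∈ Finset.Ico (asum a n) (asum a n + (B + 1))},
          g i = if (i : ℕ) = asum a n + B then 1 + m else 0} with hB'def
      have hps : ∀ (ω : Ω) (x : ℕ), x ≤ asum a n →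
          ps (fun i : {x // x ∈ Finset.range (asum a n)} => u ((i : ℕ) + 1) ω) x
            = Wsum u ω x := by
        intro ω x hx
        refine Finset.sum_congr rfl (fun i hi => ?_)
        have hmem : i ∈ Finset.range (asum a n) :=
          Finset.mem_range.2 (lt_of_lt_of_le (Finset.mem_range.1 hi) hx)
        rw [dif_pos hmem]
      have hA : (fun ω (i : {x // x ∈ Finset.range (asum a n)}) => u ((i : ℕ) + 1) ω) ⁻¹' A'
          = Eev u a n ∩ {ω | Wsum u ω (asum a n) = n + 0} := by
        ext ω
        simp only [Set.mem_preimage, hA'def, Set.mem_setOf_eq, Set.mem_inter_iff, Eev]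
        constructor
        · rintro ⟨h1, h2⟩
          refine ⟨fun j hj => ?_, ?_⟩
          · have hj' := Finset.mem_Icc.1 hj
            have hle : asum a j ≤ asum a n := asum_mono a hj'.2
            have := h1 j hj
            rwa [hps ω _ hle, hps ω _ (le_trans (Nat.sub_le _ _) hle)] at this
          · rw [hps ω _ le_rfl] at h2; exact h2
        · rintro ⟨h1, h2⟩
          refine ⟨fun j hj => ?_, ?_⟩
          · have hj' := Finset.mem_Icc.1 hj
            have hle : asum a j ≤ asum a n := asum_mono a hj'.2
            rw [hps ω _ hle, hps ω _ (le_trans (Nat.sub_le _ _) hle)]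
            exact h1 j hj
          · rw [hps ω _ le_rfl]; exact h2
      have hBset : (fun ω (i : {x // x ∈ Finset.Ico (asum a n) (asum a n + (B + 1))}) =>
            u ((i : ℕ) + 1) ω) ⁻¹' B'
          = ⋂ i ∈ Finset.Ico (asum a n) (asum a n + (B + 1)),
              {ω | u (i + 1) ω = if i = asum a n + B then 1 + m else 0} := by
        ext ω
        simp only [Set.mem_preimage, hB'def, Set.mem_setOf_eq, Set.mem_iInter]
        constructor
        · intro h i hi; exact h ⟨i, hi⟩
        · intro h i; exact h (i : ℕ) i.2
      have hmul := hIF.measure_inter_preimage_eq_mul A' B'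
        MeasurableSet.of_discrete MeasurableSet.of_discrete
      rw [hA, hBset] at hmul
      rw [hmul, ih a ha 0]
      have hblockval : μ (⋂ i ∈ Finset.Ico (asum a n) (asum a n + (B + 1)),
            {ω | u (i + 1) ω = if i = asum a n + B then 1 + m else 0})
          = (1 - q) ^ B * (q * (1 - p) ^ m * p) := by
        rw [prodSingles hindep]
        rw [show asum a n + (B + 1) = (asum a n + B) + 1 by omega,
          Finset.prod_Ico_succ_top (by omega)]
        have h1 : ∏ i ∈ Finset.Ico (asum a n) (asum a n + B),
              μ {ω | u (i + 1) ω = if i = asum a n + B then 1 + m else 0}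
            = (1 - q) ^ B := by
          rw [Finset.prod_congr rfl (fun i hi => ?_), Finset.prod_const, Nat.card_Ico]
          · congr 1; omega
          · have hi' := Finset.mem_Ico.1 hi
            rw [if_neg (by omega)]
            exact hdist0 (i + 1) (by omega)
        rw [h1, if_pos rfl, hdistk (asum a n + B + 1) (by omega) (1 + m) (by omega)]
        simp only [Nat.add_sub_cancel_left]
      rw [hblockval, Finset.prod_Icc_succ_top (by omega : 1 ≤ n + 1)]
      have hmB : marg p q (n + 1) (a (n + 1)) = p * (1 - q) ^ B * q := by
        have hne : ¬ (n + 1 = 1) := by omega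
        have hBne : ¬ a (n + 1) = 0 := by omega
        simp [marg, hne, hBne, hB]
        intro h; omega
      rw [hmB, pow_zero]; ring
lemma keyE {Ω : Type*} [MeasurableSpace Ω] (μ : Measure Ω) [IsProbabilityMeasure μ]
    (p q : ℝ≥0∞) (hp0 : 0 < p) (hp1 : p ≤ 1) (hq0 : 0 < q) (hq1 : q ≤ 1)
    (u : ℕ → Ω → ℕ) (hmeas : ∀ x : ℕ, Measurable (u x))
    (hindep : iIndepFun (fun n : ℕ => u (n + 1)) μ)
    (hdist0 : ∀ x : ℕ, 1 ≤ x → μ {ω | u x ω = 0} = 1 - q)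
    (hdistk : ∀ x : ℕ, 1 ≤ x → ∀ k : ℕ, 1 ≤ k →
      μ {ω | u x ω = k} = q * (1 - p) ^ (k - 1) * p)
    (n : ℕ) (hn : 1 ≤ n) (a : ℕ → ℕ) (ha : 1 ≤ a 1) :
    μ (Eev u a n) = ∏ j ∈ Finset.Icc 1 n, marg p q j (a j) := by
  have hcover : Eev u a n = ⋃ m : ℕ, (Eev u a n ∩ {ω | Wsum u ω (asum a n) = n + m}) := by
    ext ω
    simp only [Set.mem_iUnion, Set.mem_inter_iff, Set.mem_setOf_eq]
    constructor
    · intro h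
      have h1 := (h n (Finset.mem_Icc.2 ⟨hn, le_rfl⟩)).1
      exact ⟨Wsum u ω (asum a n) - n, h, by omega⟩
    · rintro ⟨m, h, -⟩; exact h
  have hdisj : Pairwise (Function.onFun Disjoint
      (fun m : ℕ => Eev u a n ∩ {ω | Wsum u ω (asum a n) = n + m})) := by
    intro m m' hmm'
    simp only [Function.onFun]
    rw [Set.disjoint_left]
    rintro ω ⟨-, h1⟩ ⟨-, h2⟩
    simp only [Set.mem_setOf_eq] at h1 h2
    omega
  have hmeas' : ∀ m : ℕ, MeasurableSet (Eev u a n ∩ {ω | Wsum u ω (asum a n) = n + m}) := by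
    intro m
    exact (measurableSet_Eev hmeas a n).inter
      (measurable_Wsum hmeas (asum a n) (MeasurableSet.of_discrete (s := {y | y = n + m})))
  rw [hcover, measure_iUnion hdisj hmeas']
  have hval : ∀ m : ℕ, μ (Eev u a n ∩ {ω | Wsum u ω (asum a n) = n + m})
      = (∏ j ∈ Finset.Icc 1 n, marg p q j (a j)) * ((1 - p) ^ m * p) :=
    key μ p q hp0 hp1 hq0 hq1 u hmeas hindep hdist0 hdistk n hn a ha
  rw [tsum_congr hval, ENNReal.tsum_mul_left, geom_tsum hp0 hp1, mul_one]
theorem stmt_14 {Ω : Type*} [MeasurableSpace Ω] (μ : Measure Ω) [IsProbabilityMeasure μ]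
    (p q : ℝ≥0∞) (hp0 : 0 < p) (hp1 : p ≤ 1) (hq0 : 0 < q) (hq1 : q ≤ 1)
    (u : ℕ → Ω → ℕ) (hmeas : ∀ x : ℕ, Measurable (u x))
    (hindep : iIndepFun (fun n : ℕ => u (n + 1)) μ)
    (hdist0 : ∀ x : ℕ, 1 ≤ x → μ {ω | u x ω = 0} = 1 - q)
    (hdistk : ∀ x : ℕ, 1 ≤ x → ∀ k : ℕ, 1 ≤ k →
      μ {ω | u x ω = k} = q * (1 - p) ^ (k - 1) * p)
    (U : Ω → ℕ → ℕ) (hU : ∀ ω : Ω, ∀ x : ℕ, U ω x = ∑ i ∈ Finset.Icc 1 x, u i ω)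
    (V : Ω → ℕ → ℕ) (hV : ∀ ω : Ω, ∀ x : ℕ, V ω x = sInf {y : ℕ | x ≤ U ω y})
    (v : ℕ → Ω → ℕ) (hv : ∀ x : ℕ, 1 ≤ x → ∀ ω : Ω, v x ω = V ω x - V ω (x - 1)) :
    iIndepFun (fun n : ℕ => v (n + 1)) μ ∧
    (∀ k : ℕ, 1 ≤ k → μ {ω | v 1 ω = k} = (1 - q) ^ (k - 1) * q) ∧
    (∀ x : ℕ, 2 ≤ x → μ {ω | v x ω = 0} = 1 - p ∧
      ∀ k : ℕ, 1 ≤ k → μ {ω | v x ω = k} = p * (1 - q) ^ (k - 1) * q) ∧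
    μ {ω | 1 ≤ v 1 ω} = 1 ∧
    (∀ x y : ℕ, 2 ≤ x → 2 ≤ y → ∀ k : ℕ, μ {ω | v x ω = k} = μ {ω | v y ω = k}) := by
  classical
  -- U equals the 0-indexed sum
  have hUW : ∀ (ω : Ω) (x : ℕ), U ω x = Wsum u ω x := by
    intro ω x; rw [hU]; exact sum_Icc_one (fun i => u i ω) x
  have hVx : ∀ (ω : Ω) (x : ℕ), V ω x = sInf {y : ℕ | x ≤ Wsum u ω y} := by
    intro ω x; rw [hV]
    congr 1; ext y; simp only [Set.mem_setOf_eq, hUW]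
  -- the good set
  set G : Set Ω := {ω | ∀ x : ℕ, ∃ y : ℕ, x ≤ Wsum u ω y} with hGdef
  have hZ : ∀ N : ℕ, μ {ω | ∀ i : ℕ, N ≤ i → u (i + 1) ω = 0} = 0 := by
    intro N
    have hbound : ∀ M : ℕ, μ {ω | ∀ i : ℕ, N ≤ i → u (i + 1) ω = 0} ≤ (1 - q) ^ M := by
      intro M
      have hsub : {ω | ∀ i : ℕ, N ≤ i → u (i + 1) ω = 0}
          ⊆ ⋂ i ∈ Finset.Ico N (N + M), {ω | u (i + 1) ω = (fun _ => 0) i} := by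
        intro ω hω
        simp only [Set.mem_iInter, Set.mem_setOf_eq]
        exact fun i hi => hω i (Finset.mem_Ico.1 hi).1
      refine le_trans (measure_mono hsub) ?_
      rw [prodSingles hindep,
        Finset.prod_congr rfl (fun i _ => hdist0 (i + 1) (by omega)),
        Finset.prod_const, Nat.card_Ico]
      simp
    have hlim := ENNReal.tendsto_pow_atTop_nhds_zero_of_lt_one
      (ENNReal.sub_lt_self ENNReal.one_ne_top one_ne_zero hq0.ne')
    exact le_antisymm (ge_of_tendsto hlim (Filter.Eventually.of_forall hbound)) zero_le
  have hGnull : μ Gᶜ = 0 := by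
    have hsub : Gᶜ ⊆ ⋃ N : ℕ, {ω | ∀ i : ℕ, N ≤ i → u (i + 1) ω = 0} := by
      intro ω hω
      simp only [hGdef, Set.mem_compl_iff, Set.mem_setOf_eq, not_forall, not_exists, not_le] at hω
      obtain ⟨x, hx⟩ := hω
      by_contra hcon
      simp only [Set.mem_iUnion, Set.mem_setOf_eq, not_exists, not_forall] at hcon
      have hcon' : ∀ N : ℕ, ∃ i, N ≤ i ∧ u (i + 1) ω ≠ 0 := by
        intro N
        obtain ⟨i, hi⟩ := hcon N
        exact ⟨i, by tauto⟩
      have hunb : ∀ k : ℕ, ∃ y, k ≤ Wsum u ω y := by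
        intro k
        induction k with
        | zero => exact ⟨0, Nat.zero_le _⟩
        | succ k ihk =>
          obtain ⟨y, hy⟩ := ihk
          obtain ⟨i, hiy, hine⟩ := hcon' y
          refine ⟨i + 1, ?_⟩
          have h1 : Wsum u ω y ≤ Wsum u ω i := Wsum_mono u ω hiy
          have h2 : Wsum u ω (i + 1) = Wsum u ω i + u (i + 1) ω := Wsum_succ u ω i
          omega
      obtain ⟨y, hy⟩ := hunb x
      have := hx y; omega
    refine le_antisymm (le_trans (measure_mono hsub) ?_) zero_le
    refine le_trans (measure_iUnion_le _) ?_
    simp [hZ]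
  have habs : ∀ X : Set Ω, μ X = μ (X ∩ G) := by
    intro X
    refine le_antisymm ?_ (measure_mono Set.inter_subset_left)
    calc μ X = μ ((X ∩ G) ∪ (X ∩ Gᶜ)) := by rw [Set.inter_union_compl]
    _ ≤ μ (X ∩ G) + μ (X ∩ Gᶜ) := measure_union_le _ _
    _ ≤ μ (X ∩ G) + 0 := add_le_add le_rfl
        (le_trans (measure_mono Set.inter_subset_right) hGnull.le)
    _ = μ (X ∩ G) := add_zero _
  -- measurability of V and v
  have hVmeas : ∀ x : ℕ, Measurable (fun ω => V ω x) := by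
    intro x
    apply measurable_to_countable'
    intro mval
    have hWm : ∀ (y : ℕ) (s : Set ℕ), MeasurableSet {ω | Wsum u ω y ∈ s} :=
      fun y s => measurable_Wsum hmeas y (MeasurableSet.of_discrete (s := s))
    by_cases hm0 : mval = 0
    · subst hm0
      have heq : (fun ω => V ω x) ⁻¹' {0}
          = {ω | x ≤ Wsum u ω 0} ∪ ⋂ y : ℕ, {ω | ¬ x ≤ Wsum u ω y} := by
        ext ω
        simp only [Set.mem_preimage, Set.mem_singleton_iff, Set.mem_union, Set.mem_iInter,
          Set.mem_setOf_eq, hVx]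
        rw [Nat.sInf_eq_zero]
        constructor
        · rintro (h | h)
          · exact Or.inl h
          · right; intro y hy
            have : y ∈ {y : ℕ | x ≤ Wsum u ω y} := hy
            rw [h] at this; exact this
        · rintro (h | h)
          · exact Or.inl h
          · right; ext y; simp only [Set.mem_setOf_eq, Set.mem_empty_iff_false, iff_false]
            exact h y
      rw [heq]
      exact (hWm 0 {k | x ≤ k}).union (MeasurableSet.iInter (fun y => hWm y {k | ¬ x ≤ k}))
    · have heq : (fun ω => V ω x) ⁻¹' {mval}
          = {ω | x ≤ Wsum u ω mval} ∩ ⋂ k ∈ Finset.range mval, {ω | ¬ x ≤ Wsum u ω k} := by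
        ext ω
        simp only [Set.mem_preimage, Set.mem_singleton_iff, Set.mem_inter_iff, Set.mem_iInter,
          Set.mem_setOf_eq, hVx, Finset.mem_range]
        constructor
        · intro h
          have hne : {y : ℕ | x ≤ Wsum u ω y}.Nonempty := by
            by_contra hcon
            rw [Set.not_nonempty_iff_eq_empty] at hcon
            rw [hcon] at h
            simp [Nat.sInf_empty] at h; omega
          have hmem := Nat.sInf_mem hne
          rw [h] at hmem
          refine ⟨hmem, fun k hk => ?_⟩
          have hlt : k < sInf {y : ℕ | x ≤ Wsum u ω y} := by rw [h]; exact hk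
          have hnm := Nat.notMem_of_lt_sInf hlt
          simpa using hnm
        · rintro ⟨h1, h2⟩
          refine le_antisymm (Nat.sInf_le h1) ?_
          by_contra hcon
          push_neg at hcon
          have hmem := Nat.sInf_mem (⟨mval, h1⟩ : {y : ℕ | x ≤ Wsum u ω y}.Nonempty)
          exact h2 _ hcon hmem
      rw [heq]
      exact (hWm mval {k | x ≤ k}).inter
        (MeasurableSet.biInter (Finset.range mval).countable_toSet
          (fun k _ => hWm k {k | ¬ x ≤ k}))
  have hvmeas : ∀ j : ℕ, 1 ≤ j → Measurable (v j) := by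
    intro j hj
    have : v j = fun ω => V ω j - V ω (j - 1) := funext (hv j hj)
    rw [this]
    exact (hVmeas j).sub (hVmeas (j - 1))
  -- pathwise facts on the good set
  have hVfacts : ∀ ω ∈ G,
      (∀ x, x ≤ Wsum u ω (V ω x)) ∧
      (∀ x y, y < V ω x → ¬ x ≤ Wsum u ω y) ∧
      (∀ x y, x ≤ Wsum u ω y → V ω x ≤ y) := by
    intro ω hω
    have hne : ∀ x : ℕ, {y : ℕ | x ≤ Wsum u ω y}.Nonempty := hω
    refine ⟨fun x => ?_, fun x y hy => ?_, fun x y hxy => ?_⟩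
    · have := Nat.sInf_mem (hne x)
      rw [← hVx] at this
      exact this
    · rw [hVx] at hy
      have := Nat.notMem_of_lt_sInf hy
      simpa using this
    · rw [hVx]
      exact Nat.sInf_le hxy
  have hV0 : ∀ ω : Ω, V ω 0 = 0 := by
    intro ω
    rw [hVx]
    exact le_antisymm (Nat.sInf_le (Nat.zero_le _)) (Nat.zero_le _)
  -- pathwise equivalence between dual cylinder and Eev
  have hEquiv : ∀ n : ℕ, 1 ≤ n → ∀ a : ℕ → ℕ, 1 ≤ a 1 → ∀ ω ∈ G,
      ((∀ j ∈ Finset.Icc 1 n, v j ω = a j) ↔ ω ∈ Eev u a n) := by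
    intro n hn a ha ω hω
    obtain ⟨hVmem, hVlt, hVle⟩ := hVfacts ω hω
    have hVmono : ∀ x x' : ℕ, x ≤ x' → V ω x ≤ V ω x' :=
      fun x x' h => hVle x (V ω x') (le_trans h (hVmem x'))
    have step1 : (∀ j ∈ Finset.Icc 1 n, v j ω = a j) ↔ (∀ j, j ≤ n → V ω j = asum a j) := by
      constructor
      · intro h j
        induction j with
        | zero => intro _; rw [hV0, asum_zero]
        | succ j ihj =>
          intro hj
          have hvj := h (j + 1) (Finset.mem_Icc.2 ⟨by omega, hj⟩)
          rw [hv (j + 1) (by omega)] at hvj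
          simp only [Nat.add_sub_cancel] at hvj
          have hmono := hVmono j (j + 1) (by omega)
          have hIH := ihj (by omega)
          rw [asum_succ]
          omega
      · intro h j hj
        have hj' := Finset.mem_Icc.1 hj
        obtain ⟨j0, rfl⟩ : ∃ j0, j = j0 + 1 := ⟨j - 1, by omega⟩
        have h1 : V ω (j0 + 1) = asum a (j0 + 1) := h (j0 + 1) hj'.2
        have h0 : V ω j0 = asum a j0 := h j0 (by omega)
        rw [hv (j0 + 1) (by omega)]
        simp only [Nat.add_sub_cancel]
        have hmono := hVmono j0 (j0 + 1) (by omega)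
        have hs := asum_succ a j0
        omega
    have step2 : (∀ j, j ≤ n → V ω j = asum a j) ↔ ω ∈ Eev u a n := by
      constructor
      · intro h j hj
        have hj' := Finset.mem_Icc.1 hj
        constructor
        · rw [← h j hj'.2]; exact hVmem j
        · intro haj
          have hasj : 1 ≤ asum a j := le_trans haj (le_asum a hj'.1)
          have hlt : asum a j - 1 < V ω j := by rw [h j hj'.2]; omega
          have := hVlt j _ hlt
          omega
      · intro hE
        have main : ∀ j, j ≤ n → V ω j = asum a j := by
          intro j
          induction j with
          | zero => intro _; rw [hV0, asum_zero]
          | succ j ihj =>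
            intro hj
            have hIH := ihj (by omega)
            have hEj := hE (j + 1) (Finset.mem_Icc.2 ⟨by omega, hj⟩)
            have h1 : V ω (j + 1) ≤ asum a (j + 1) := hVle _ _ hEj.1
            by_cases hb : 1 ≤ a (j + 1)
            · have h2 : asum a (j + 1) ≤ V ω (j + 1) := by
                by_contra hcon
                push_neg at hcon
                have hasj : 1 ≤ asum a (j + 1) := le_trans hb (le_asum a (by omega))
                have hV1 : V ω (j + 1) ≤ asum a (j + 1) - 1 := by omega
                have hm := hVmem (j + 1)
                have hWm : Wsum u ω (V ω (j + 1)) ≤ Wsum u ω (asum a (j + 1) - 1) :=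
                  Wsum_mono u ω hV1
                have hlt := hEj.2 hb
                omega
              omega
            · have hbz : a (j + 1) = 0 := by omega
              have hss : asum a (j + 1) = asum a j := by rw [asum_succ, hbz, Nat.add_zero]
              have h2 : asum a j ≤ V ω (j + 1) := by
                have := hVmono j (j + 1) (by omega)
                omega
              omega
        exact main
    rw [step1, step2]
  -- v 1 = 0 only outside G
  have hv1G : {ω | v 1 ω = 0} ⊆ Gᶜ := by
    intro ω hω
    by_contra hcon
    rw [Set.notMem_compl_iff] at hcon
    obtain ⟨hVmem, hVlt, hVle⟩ := hVfacts ω hcon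
    have h1 : v 1 ω = V ω 1 := by
      rw [hv 1 le_rfl]
      simp [hV0]
    have h2 : 1 ≤ Wsum u ω (V ω 1) := hVmem 1
    have h3 : V ω 1 ≠ 0 := by
      intro hz
      rw [hz, Wsum_zero] at h2
      omega
    simp only [Set.mem_setOf_eq] at hω
    omega
  -- measure of cylinders in terms of v
  have hCyl : ∀ n : ℕ, 1 ≤ n → ∀ a : ℕ → ℕ,
      μ {ω | ∀ j ∈ Finset.Icc 1 n, v j ω = a j} = ∏ j ∈ Finset.Icc 1 n, marg p q j (a j) := by
    intro n hn a
    by_cases ha : 1 ≤ a 1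
    · have h1 : {ω | ∀ j ∈ Finset.Icc 1 n, v j ω = a j} ∩ G = Eev u a n ∩ G := by
        ext ω
        simp only [Set.mem_inter_iff, Set.mem_setOf_eq]
        constructor
        · rintro ⟨h, hG⟩; exact ⟨(hEquiv n hn a ha ω hG).1 h, hG⟩
        · rintro ⟨h, hG⟩; exact ⟨(hEquiv n hn a ha ω hG).2 h, hG⟩
      rw [habs {ω | ∀ j ∈ Finset.Icc 1 n, v j ω = a j}, h1, ← habs (Eev u a n)]
      exact keyE μ p q hp0 hp1 hq0 hq1 u hmeas hindep hdist0 hdistk n hn a ha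
    · have ha0 : a 1 = 0 := by omega
      have hsub : {ω | ∀ j ∈ Finset.Icc 1 n, v j ω = a j} ⊆ Gᶜ := by
        intro ω hω
        apply hv1G
        have := hω 1 (Finset.mem_Icc.2 ⟨le_rfl, hn⟩)
        simp only [Set.mem_setOf_eq]
        omega
      have hlhs : μ {ω | ∀ j ∈ Finset.Icc 1 n, v j ω = a j} = 0 :=
        le_antisymm (le_trans (measure_mono hsub) hGnull.le) zero_le
      rw [hlhs]
      refine (Finset.prod_eq_zero (Finset.mem_Icc.2 ⟨le_rfl, hn⟩) ?_).symm
      simp [marg, ha0]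
  -- factorization over arbitrary finite index sets
  have hFin : ∀ (S : Finset ℕ), (∀ j ∈ S, 1 ≤ j) → ∀ b : ℕ → ℕ,
      μ (⋂ j ∈ S, {ω | v j ω = b j}) = ∏ j ∈ S, marg p q j (b j) := by
    intro S hS b
    set N := max 1 (S.sup id) with hNdef
    have hNn : 1 ≤ N := le_max_left _ _
    have hSsub : S ⊆ Finset.Icc 1 N := by
      intro j hj
      refine Finset.mem_Icc.2 ⟨hS j hj, ?_⟩
      exact le_trans (Finset.le_sup (f := id) hj) (le_max_right _ _)
    have main : ∀ (t : ℕ) (S' : Finset ℕ), S' ⊆ Finset.Icc 1 N →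
        (Finset.Icc 1 N \ S').card ≤ t → ∀ b' : ℕ → ℕ,
        μ (⋂ j ∈ S', {ω | v j ω = b' j}) = ∏ j ∈ S', marg p q j (b' j) := by
      intro t
      induction t with
      | zero =>
        intro S' hsub hcard b'
        have hempty : Finset.Icc 1 N \ S' = ∅ := Finset.card_eq_zero.1 (by omega)
        have hSeq : S' = Finset.Icc 1 N := by
          refine Finset.Subset.antisymm hsub (fun j hj => ?_)
          by_contra hcon
          have : j ∈ Finset.Icc 1 N \ S' := Finset.mem_sdiff.2 ⟨hj, hcon⟩
          rw [hempty] at this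
          exact absurd this (Finset.notMem_empty j)
        subst hSeq
        have hset : (⋂ j ∈ Finset.Icc 1 N, {ω | v j ω = b' j})
            = {ω | ∀ j ∈ Finset.Icc 1 N, v j ω = b' j} := by
          ext ω; simp [Set.mem_iInter]
        rw [hset]
        exact hCyl N hNn b'
      | succ t iht =>
        intro S' hsub hcard b'
        by_cases hfull : (Finset.Icc 1 N \ S').card ≤ t
        · exact iht S' hsub hfull b'
        · obtain ⟨j0, hj0⟩ : (Finset.Icc 1 N \ S').Nonempty := by
            rw [← Finset.card_pos]; omega
          have hj0Icc : j0 ∈ Finset.Icc 1 N := (Finset.mem_sdiff.1 hj0).1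
          have hj0S : j0 ∉ S' := (Finset.mem_sdiff.1 hj0).2
          have hsub' : insert j0 S' ⊆ Finset.Icc 1 N := Finset.insert_subset hj0Icc hsub
          have hcard' : (Finset.Icc 1 N \ insert j0 S').card ≤ t := by
            have h1 : Finset.Icc 1 N \ insert j0 S' = (Finset.Icc 1 N \ S').erase j0 := by
              ext x
              simp only [Finset.mem_sdiff, Finset.mem_insert, Finset.mem_erase]
              tauto
            rw [h1, Finset.card_erase_of_mem hj0]
            omega
          have hmeasS : ∀ (c : ℕ → ℕ) (S'' : Finset ℕ), S'' ⊆ Finset.Icc 1 N →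
              MeasurableSet (⋂ j ∈ S'', {ω | v j ω = c j}) := by
            intro c S'' hsub''
            refine MeasurableSet.biInter S''.countable_toSet (fun j hj => ?_)
            have hj1 : 1 ≤ j := (Finset.mem_Icc.1 (hsub'' hj)).1
            exact (hvmeas j hj1) (MeasurableSet.of_discrete (s := {c j}))
          have hpart : μ (⋂ j ∈ S', {ω | v j ω = b' j})
              = ∑' k : ℕ, μ ((⋂ j ∈ S', {ω | v j ω = b' j}) ∩ {ω | v j0 ω = k}) := by
            rw [← measure_iUnion]
            · congr 1
              ext ω
              simp only [Set.mem_iUnion, Set.mem_inter_iff, Set.mem_setOf_eq]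
              constructor
              · intro h; exact ⟨v j0 ω, h, rfl⟩
              · rintro ⟨k, h, -⟩; exact h
            · intro k k' hkk'
              simp only [Function.onFun]
              rw [Set.disjoint_left]
              rintro ω ⟨-, h1⟩ ⟨-, h2⟩
              simp only [Set.mem_setOf_eq] at h1 h2
              omega
            · intro k
              refine (hmeasS b' S' hsub).inter ?_
              have hj01 : 1 ≤ j0 := (Finset.mem_Icc.1 hj0Icc).1
              exact (hvmeas j0 hj01) (MeasurableSet.of_discrete (s := {k}))
          have hstep : ∀ k : ℕ, (⋂ j ∈ S', {ω | v j ω = b' j}) ∩ {ω | v j0 ω = k}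
              = ⋂ j ∈ insert j0 S', {ω | v j ω = Function.update b' j0 k j} := by
            intro k
            ext ω
            simp only [Set.mem_inter_iff, Set.mem_iInter, Set.mem_setOf_eq, Finset.mem_insert]
            constructor
            · rintro ⟨h1, h2⟩ j hj
              rcases hj with rfl | hj
              · rw [Function.update_self]; exact h2
              · rw [Function.update_of_ne (by rintro rfl; exact hj0S hj)]
                exact h1 j hj
            · intro h
              refine ⟨fun j hj => ?_, ?_⟩
              · have := h j (Or.inr hj)
                rwa [Function.update_of_ne (by rintro rfl; exact hj0S hj)] at this
              · have := h j0 (Or.inl rfl)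
                rwa [Function.update_self] at this
          rw [hpart]
          calc ∑' k : ℕ, μ ((⋂ j ∈ S', {ω | v j ω = b' j}) ∩ {ω | v j0 ω = k})
              = ∑' k : ℕ, ∏ j ∈ insert j0 S', marg p q j (Function.update b' j0 k j) := by
                refine tsum_congr fun k => ?_
                rw [hstep k]
                exact iht _ hsub' hcard' _
            _ = ∑' k : ℕ, (marg p q j0 k * ∏ j ∈ S', marg p q j (b' j)) := by
                refine tsum_congr fun k => ?_
                rw [Finset.prod_insert hj0S, Function.update_self]
                congr 1
                exact Finset.prod_congr rfl fun j hj => by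
                  rw [Function.update_of_ne (by rintro rfl; exact hj0S hj)]
            _ = (∑' k : ℕ, marg p q j0 k) * ∏ j ∈ S', marg p q j (b' j) :=
                ENNReal.tsum_mul_right
            _ = ∏ j ∈ S', marg p q j (b' j) := by
                rw [tsum_marg hp0 hp1 hq0 hq1 j0, one_mul]
    exact main (Finset.Icc 1 N \ S).card S hSsub le_rfl b
  -- marginals
  have hmarg : ∀ x : ℕ, 1 ≤ x → ∀ k : ℕ, μ {ω | v x ω = k} = marg p q x k := by
    intro x hx k
    have := hFin {x} (by simp [hx]) (fun _ => k)
    simpa using this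
  refine ⟨?_, ?_, ?_, ?_, ?_⟩
  · -- independence
    rw [iIndepFun_iff_iIndep]
    refine iIndepSets.iIndep (fun i => ?_) (fun n => Set.range fun k => v (n + 1) ⁻¹' {k})
      (fun n => ?_) (fun i => le_antisymm ?_ ?_) ?_
    · exact MeasurableSpace.comap_le_iff_le_map.2 (fun s hs => (hvmeas (i + 1) (by omega)) hs)
    · rintro s ⟨k, rfl⟩ t ⟨l, rfl⟩ hne
      have hkl : k = l := by
        obtain ⟨ω, h1, h2⟩ := hne
        simp only [Set.mem_preimage, Set.mem_singleton_iff] at h1 h2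
        omega
      subst hkl
      simpa using ⟨k, rfl⟩
    · rintro t ⟨s, -, rfl⟩
      have hs : v (i + 1) ⁻¹' s = ⋃ k ∈ s, v (i + 1) ⁻¹' {k} := by ext; simp
      rw [hs]
      exact MeasurableSet.biUnion s.to_countable
        (fun k _ => MeasurableSpace.measurableSet_generateFrom ⟨k, rfl⟩)
    · exact MeasurableSpace.generateFrom_le
        (by rintro t ⟨k, rfl⟩; exact ⟨{k}, MeasurableSet.of_discrete, rfl⟩)
    · rw [iIndepSets_iff]
      intro s f hf
      have hchoice : ∀ i ∈ s, ∃ k : ℕ, v (i + 1) ⁻¹' {k} = f i := fun i hi => hf i hi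
      set g : ℕ → ℕ :=
        fun i => if h : ∃ k : ℕ, v (i + 1) ⁻¹' {k} = f i then h.choose else 0 with hgdef
      have hg : ∀ i ∈ s, v (i + 1) ⁻¹' {g i} = f i := by
        intro i hi
        have h := hchoice i hi
        simp only [hgdef, dif_pos h]
        exact h.choose_spec
      have h1 : (⋂ i ∈ s, f i) = ⋂ j ∈ s.image (· + 1), {ω | v j ω = g (j - 1)} := by
        ext ω
        simp only [Set.mem_iInter, Finset.mem_image]
        constructor
        · rintro h j ⟨i, hi, rfl⟩
          have := h i hi
          rw [← hg i hi] at this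
          simpa using this
        · intro h i hi
          rw [← hg i hi]
          have := h (i + 1) ⟨i, hi, rfl⟩
          simpa using this
      have h2 : μ (⋂ j ∈ s.image (· + 1), {ω | v j ω = g (j - 1)})
          = ∏ j ∈ s.image (· + 1), marg p q j (g (j - 1)) := by
        refine hFin _ (fun j hj => ?_) _
        simp only [Finset.mem_image] at hj
        obtain ⟨i, -, rfl⟩ := hj
        omega
      rw [h1, h2, Finset.prod_image (by intro x _ y _ h; simp only at h; omega)]
      refine Finset.prod_congr rfl (fun i hi => ?_)
      simp only [Nat.add_sub_cancel]
      rw [← hg i hi]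
      exact (hmarg (i + 1) (by omega) (g i)).symm
  · -- marginal of v 1
    intro k hk
    rw [hmarg 1 le_rfl k]
    have hk0 : ¬ k = 0 := by omega
    simp [marg, hk0]
  · -- marginals of v x, x ≥ 2
    intro x hx
    have hne : ¬ x = 1 := by omega
    refine ⟨?_, fun k hk => ?_⟩
    · rw [hmarg x (by omega) 0]
      simp [marg, hne]
    · rw [hmarg x (by omega) k]
      have hk0 : ¬ k = 0 := by omega
      simp [marg, hne, hk0]
  · -- v 1 ≥ 1 a.s.
    have h0 : μ {ω | v 1 ω = 0} = 0 := by
      rw [hmarg 1 le_rfl 0]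
      simp [marg]
    have hcompl : {ω | 1 ≤ v 1 ω} = {ω | v 1 ω = 0}ᶜ := by
      ext ω
      simp [Nat.one_le_iff_ne_zero]
    have hms : MeasurableSet {ω | v 1 ω = 0} :=
      (hvmeas 1 le_rfl) (MeasurableSet.of_discrete (s := {0}))
    rw [hcompl, measure_compl hms (measure_ne_top μ _), h0, measure_univ, tsub_zero]
  · -- identical distribution for x, y ≥ 2
    intro x y hx hy k
    rw [hmarg x (by omega) k, hmarg y (by omega) k]
    have hxne : ¬ x = 1 := by omega
    have hyne : ¬ y = 1 := by omega
    simp [marg, hxne, hyne]
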